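/- Let ℓ ≥ 1, s ≥ 0 be integers and a = (a_0, …, a_ℓ) ∈ ℝ^{ℓ+1}. Let A_{s,a} be the (ℓ+1)×(ℓ+1) real matrix whose entry in row i and column j (1 ≤ i ≤ ℓ, 1 ≤ j ≤ ℓ+1) is ((i-1)(ℓ+1) + j)^{ℓ-1} and whose last row is (0^s·a_0, 1^s·a_1, …, ℓ^s·a_ℓ) (with 0^0 = 1). Then det(A_{s,a}) = σ_ℓ · ∑_{j=0}^{ℓ} (-1)^j · C(ℓ,j) · j^s · a_j, where σ_ℓ = (-1)^{ℓ(ℓ+1)/2} · (ℓ+1)^{ℓ(ℓ-1)/2} · ∏_{j=0}^{ℓ-1} C(ℓ-1,j) · ∏_{j=1}^{ℓ-1} (j!)^2. -/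

import Mathlib

open Finset Polynomial Matrix Equiv fwdDiff

private lemma fwdDiff_eval' (p : ℝ[X]) :
    Δ_[(1:ℝ)] (fun x => p.eval x) = fun x => (p.comp (X + 1) - p).eval x := by
  funext x
  simp [fwdDiff, eval_comp]

private lemma degree_comp_sub_lt' (p : ℝ[X]) (hp : p ≠ 0) :
    (p.comp (X + 1) - p).degree < p.degree := by
  have h1 : (X + 1 : ℝ[X]) = X + C 1 := by simp
  have hX : (X + 1 : ℝ[X]).natDegree = 1 := by rw [h1, natDegree_X_add_C]
  have hlc : (p.comp (X + 1)).leadingCoeff = p.leadingCoeff := by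
    rw [leadingCoeff_comp (by rw [hX]; exact one_ne_zero)]
    simp [h1, leadingCoeff_X_add_C]
  rcases eq_or_ne p.natDegree 0 with h0 | h0
  · have hc : p = C (p.coeff 0) := eq_C_of_natDegree_eq_zero h0
    rw [hc]
    simp only [C_comp, sub_self, degree_zero]
    exact bot_lt_iff_ne_bot.mpr (by
      rw [← hc, Ne, degree_eq_bot]; exact hp)
  · have hne : p.comp (X + 1) ≠ 0 := by
      intro h
      apply hp
      have h2 := hlc
      rw [h, leadingCoeff_zero, eq_comm, leadingCoeff_eq_zero] at h2
      exact h2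
    have hdeg : (p.comp (X + 1)).degree = p.degree := by
      rw [degree_eq_natDegree hne, degree_eq_natDegree hp, natDegree_comp, hX, mul_one]
    calc (p.comp (X + 1) - p).degree < (p.comp (X + 1)).degree :=
          degree_sub_lt hdeg hne hlc
      _ = p.degree := hdeg

private lemma iter_fwdDiff_eval' : ∀ (n : ℕ) (p : ℝ[X]), p.degree < n →
    (Δ_[(1:ℝ)])^[n] (fun x => p.eval x) = fun _ => 0 := by
  intro n
  induction n with
  | zero =>
    intro p h
    have hp : p = 0 := by
      rw [← degree_eq_bot]
      exact Nat.WithBot.lt_zero_iff.mp (by exact_mod_cast h)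
    subst hp
    funext x; simp
  | succ n ih =>
    intro p h
    rw [Function.iterate_succ_apply, fwdDiff_eval']
    apply ih
    rcases eq_or_ne p 0 with rfl | hp
    · rw [zero_comp, sub_zero, degree_zero]
      exact WithBot.bot_lt_coe n
    · have h2 := Nat.WithBot.add_one_le_of_lt (degree_comp_sub_lt' p hp)
      have h3 : (p.comp (X+1) - p).degree + 1 < (n:WithBot ℕ) + 1 := by
        refine lt_of_le_of_lt h2 ?_
        have hc : ((n:ℕ) : WithBot ℕ) + 1 = ((n+1 : ℕ) : WithBot ℕ) := by push_cast; ring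
        rw [hc]
        exact_mod_cast h
      exact lt_of_add_lt_add_right h3

private lemma alt_sum_poly' (n : ℕ) (p : ℝ[X]) (h : p.degree < n) :
    ∑ k ∈ range (n + 1), (-1:ℝ)^k * (n.choose k : ℝ) * p.eval (k : ℝ) = 0 := by
  have H := fwdDiff_iter_eq_sum_shift (1:ℝ) (fun x => p.eval x) n 0
  rw [iter_fwdDiff_eval' n p h] at H
  have key : ∑ k ∈ range (n + 1), (-1:ℝ)^k * (n.choose k : ℝ) * p.eval (k : ℝ)
      = (-1:ℝ)^n * ∑ k ∈ range (n + 1),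
          ((-1 : ℤ) ^ (n - k) * (n.choose k : ℤ)) • p.eval (0 + k • (1:ℝ)) := by
    rw [mul_sum]
    refine sum_congr rfl fun k hk => ?_
    have hkn : k ≤ n := Nat.lt_succ_iff.mp (mem_range.mp hk)
    have hs : (-1:ℝ)^k = (-1:ℝ)^n * (-1:ℝ)^(n-k) := by
      rw [← pow_add]
      have he : n + (n - k) = 2*(n-k) + k := by omega
      rw [he, pow_add, pow_mul]
      simp
    simp only [zsmul_eq_mul, Int.cast_mul, Int.cast_pow, Int.cast_neg, Int.cast_one,
      Int.cast_natCast, nsmul_eq_mul, mul_one, zero_add]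
    rw [hs]; ring
  rw [key, ← H]
  simp

private lemma phi_row' (m c : ℕ) :
    ∑ j : Fin (m+2), (-1:ℝ)^(j:ℕ) * ((m+1).choose (j:ℕ) : ℝ) * ((c + (j:ℕ) + 1 : ℕ):ℝ)^m = 0 := by
  have hdeg : ((X + C ((c:ℝ)+1))^m).degree < ((m+1 : ℕ) : WithBot ℕ) := by
    rw [degree_pow, degree_X_add_C]
    rw [nsmul_eq_mul, mul_one]
    exact_mod_cast Nat.lt_succ_self m
  have h := alt_sum_poly' (m+1) ((X + C ((c:ℝ)+1))^m) hdeg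
  rw [Fin.sum_univ_eq_sum_range
    (fun j => (-1:ℝ)^j * ((m+1).choose j : ℝ) * ((c + j + 1 : ℕ):ℝ)^m) (m+2)]
  rw [← h]
  refine sum_congr rfl fun k hk => ?_
  congr 1
  rw [eval_pow, eval_add, eval_X, eval_C]
  push_cast; ring

private lemma rev_key' (n : ℕ) :
    finRotate (n+1) * (Fin.revPerm : Equiv.Perm (Fin (n+1)))
      = Equiv.Perm.decomposeFin.symm (0, (Fin.revPerm : Equiv.Perm (Fin n))) := by
  apply Equiv.ext
  intro i
  induction i using Fin.cases with
  | zero =>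
    simp [Fin.rev_zero]
  | succ x =>
    simp [Fin.rev_succ, Fin.coeSucc_eq_succ]

private lemma sign_revPerm' : ∀ n : ℕ,
    Equiv.Perm.sign (Fin.revPerm : Equiv.Perm (Fin n)) = (-1) ^ (n * (n-1) / 2) := by
  intro n
  induction n with
  | zero =>
    have h1 : (Fin.revPerm : Equiv.Perm (Fin 0)) = 1 := by
      apply Equiv.ext; intro i; exact i.elim0
    simp [h1]
  | succ n ih =>
    have key := congrArg Equiv.Perm.sign (rev_key' n)
    rw [Equiv.Perm.sign_mul, sign_finRotate, Equiv.Perm.decomposeFin.symm_sign, ih] at key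
    rw [if_pos rfl, one_mul] at key
    have h2 : (n+1) * n / 2 = n * (n-1) / 2 + n := by
      obtain ⟨t, ht⟩ : 2 ∣ n * (n-1) := (Nat.even_mul_pred_self n).two_dvd
      have h1 : (n+1) * n = n * (n-1) + 2*n := by
        rcases n with _ | k
        · simp
        · rw [Nat.add_sub_cancel]; ring
      omega
    rw [Nat.add_sub_cancel, h2, pow_add]
    calc Equiv.Perm.sign (Fin.revPerm : Equiv.Perm (Fin (n+1)))
        = ((-1)^n * (-1)^n) * Equiv.Perm.sign (Fin.revPerm : Equiv.Perm (Fin (n+1))) := by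
          rw [← pow_add]
          have h3 : n + n = 2 * n := by ring
          rw [h3, pow_mul]
          simp
      _ = (-1)^n * ((-1)^n * Equiv.Perm.sign (Fin.revPerm : Equiv.Perm (Fin (n+1)))) := by
          rw [mul_assoc]
      _ = (-1) ^ (n * (n-1) / 2) * (-1)^n := by rw [Nat.add_sub_cancel] at key; rw [key, mul_comm]

private lemma prod_Ioi_sub' (m : ℕ) :
    (∏ i : Fin (m+1), ∏ j ∈ Ioi i, ((j:ℕ) - (i:ℕ) : ℝ)) = (Nat.superFactorial m : ℝ) := by
  have h := Matrix.det_vandermonde_id_eq_superFactorial (R := ℝ) m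
  rw [Matrix.det_vandermonde] at h
  exact_mod_cast h

private lemma sum_card_Ioi' (m : ℕ) :
    ∑ i : Fin (m+1), (Ioi i).card = (m+1) * m / 2 := by
  have h1 : ∀ i : Fin (m+1), (Ioi i).card = m - (i:ℕ) := by
    intro i; rw [Fin.card_Ioi]; omega
  simp only [h1]
  rw [Fin.sum_univ_eq_sum_range (fun i => m - i) (m+1)]
  have h2 := Finset.sum_range_reflect (fun i => i) (m+1)
  simp only [Nat.add_sub_cancel] at h2
  calc ∑ i ∈ range (m+1), (m - i) = ∑ i ∈ range (m+1), i := h2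
    _ = (m+1) * m / 2 := by rw [Finset.sum_range_id]; simp

private lemma det_B' (m : ℕ) :
    (Matrix.of fun i k : Fin (m+1) => (((i:ℕ)*(m+2)+(k:ℕ)+1 : ℕ):ℝ)^m).det
      = (-1:ℝ)^((m+1)*m/2) * (∏ k ∈ range (m+1), (m.choose k : ℝ)) *
          ((m+2 : ℝ))^((m+1)*m/2) * ((Nat.superFactorial m : ℝ))^2 := by
  set v : Fin (m+1) → ℝ := fun i => (i:ℕ)*(m+2) with hv
  set y : Fin (m+1) → ℝ := fun j => (j:ℕ)+1 with hy
  set P : Matrix (Fin (m+1)) (Fin (m+1)) ℝ :=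
    (Matrix.vandermonde y)ᵀ.submatrix Fin.revPerm id with hP
  set N : Matrix (Fin (m+1)) (Fin (m+1)) ℝ :=
    Matrix.of fun k j => (m.choose (k:ℕ) : ℝ) * y j ^ (m - (k:ℕ)) with hN
  have hfact : (Matrix.of fun i k : Fin (m+1) => (((i:ℕ)*(m+2)+(k:ℕ)+1 : ℕ):ℝ)^m)
      = Matrix.vandermonde v * N := by
    ext i j
    rw [Matrix.mul_apply]
    simp only [Matrix.of_apply, Matrix.vandermonde_apply, hN, Matrix.of_apply]
    rw [Fin.sum_univ_eq_sum_range (fun k => v i ^ k * ((m.choose k : ℝ) * y j ^ (m - k))) (m+1)]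
    have hap := add_pow (v i) (y j) m
    have hcast : (((i:ℕ)*(m+2)+(j:ℕ)+1 : ℕ):ℝ) = v i + y j := by
      simp only [hv, hy]; push_cast; ring
    rw [hcast, hap]
    exact sum_congr rfl fun k hk => by ring
  have hNP : N = Matrix.of fun (k j : Fin (m+1)) => (m.choose (k:ℕ) : ℝ) * P k j := by
    ext k j
    simp only [hN, hP, Matrix.of_apply, Matrix.submatrix_apply, Matrix.transpose_apply,
      Matrix.vandermonde_apply, id]
    congr 1
    congr 1
    rw [Fin.revPerm_apply, Fin.val_rev]
    omega
  have hdetP : P.det = (-1:ℝ)^((m+1)*m/2) * ∏ i : Fin (m+1), ∏ j ∈ Ioi i, (y j - y i) := by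
    have h1 : P.det = (Equiv.Perm.sign (Fin.revPerm : Equiv.Perm (Fin (m+1))) : ℤ) *
        (Matrix.vandermonde y)ᵀ.det := Matrix.det_permute _ _
    rw [h1, sign_revPerm', Matrix.det_transpose, Matrix.det_vandermonde]
    simp [Nat.add_sub_cancel]
  have hdetN : N.det = (∏ k ∈ range (m+1), (m.choose k : ℝ)) * P.det := by
    rw [hNP]
    have h2 := Matrix.det_mul_column (fun k : Fin (m+1) => (m.choose (k:ℕ) : ℝ)) P
    rw [h2, Fin.prod_univ_eq_prod_range (fun k => (m.choose k : ℝ)) (m+1)]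
  have hprody : (∏ i : Fin (m+1), ∏ j ∈ Ioi i, (y j - y i)) = (Nat.superFactorial m : ℝ) := by
    rw [← prod_Ioi_sub' m]
    refine Finset.prod_congr rfl fun i _ => Finset.prod_congr rfl fun j _ => ?_
    simp only [hy]; ring
  have hprodv : (∏ i : Fin (m+1), ∏ j ∈ Ioi i, (v j - v i))
      = ((m+2:ℝ))^((m+1)*m/2) * (Nat.superFactorial m : ℝ) := by
    have h1 : ∀ i : Fin (m+1), ∀ j ∈ Ioi i, v j - v i = (m+2) * ((j:ℕ) - (i:ℕ) : ℝ) := by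
      intro i j _; simp only [hv]; ring
    calc (∏ i : Fin (m+1), ∏ j ∈ Ioi i, (v j - v i))
        = ∏ i : Fin (m+1), ∏ j ∈ Ioi i, ((m+2:ℝ) * ((j:ℕ) - (i:ℕ) : ℝ)) :=
          Finset.prod_congr rfl fun i _ => Finset.prod_congr rfl fun j hj => h1 i j hj
      _ = ∏ i : Fin (m+1), (((m+2:ℝ))^(Ioi i).card * ∏ j ∈ Ioi i, ((j:ℕ) - (i:ℕ) : ℝ)) := by
          refine Finset.prod_congr rfl fun i _ => ?_
          rw [Finset.prod_mul_distrib, Finset.prod_const]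
      _ = ((m+2:ℝ))^((m+1)*m/2) * (Nat.superFactorial m : ℝ) := by
          rw [Finset.prod_mul_distrib, Finset.prod_pow_eq_pow_sum, sum_card_Ioi', prod_Ioi_sub']
  rw [hfact, Matrix.det_mul, Matrix.det_vandermonde, hdetN, hdetP, hprody, hprodv]
  ring

private lemma superFactorial_ne_zero' (m : ℕ) : Nat.superFactorial m ≠ 0 := by
  induction m with
  | zero => simp
  | succ n ih =>
    rw [Nat.superFactorial_succ]
    exact Nat.mul_ne_zero (Nat.factorial_ne_zero _) ih

/-- The matrix `A_{s,a}`: rows `1,…,ℓ` (here `i : Fin (ℓ+1)` with `(i:ℕ) < ℓ`) have entries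
`((i)(ℓ+1) + j + 1)^{ℓ-1}` (1-indexed: `((i-1)(ℓ+1)+j)^{ℓ-1}`), and the last row is
`(0^s a_0, 1^s a_1, …, ℓ^s a_ℓ)` (with the convention `0^0 = 1`, as in Lean). -/
def matA (ℓ s : ℕ) (a : Fin (ℓ + 1) → ℝ) : Matrix (Fin (ℓ + 1)) (Fin (ℓ + 1)) ℝ :=
  fun i j =>
    if (i : ℕ) < ℓ then (((i : ℕ) * (ℓ + 1) + (j : ℕ) + 1 : ℕ) : ℝ) ^ (ℓ - 1)
    else ((j : ℕ) : ℝ) ^ s * a j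

/-- The constant `σ_ℓ`. -/
noncomputable def sigma (ℓ : ℕ) : ℝ :=
  (-1 : ℝ) ^ (ℓ * (ℓ + 1) / 2) * ((ℓ + 1 : ℕ) : ℝ) ^ (ℓ * (ℓ - 1) / 2) *
    (∏ j ∈ Finset.range ℓ, ((ℓ - 1).choose j : ℝ)) *
      (∏ j ∈ Finset.Ico 1 ℓ, ((j.factorial : ℝ)) ^ 2)

theorem det_matA (ℓ : ℕ) (hℓ : 1 ≤ ℓ) (s : ℕ) (a : Fin (ℓ + 1) → ℝ) :
    (matA ℓ s a).det =
      sigma ℓ * ∑ j : Fin (ℓ + 1),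
        (-1 : ℝ) ^ (j : ℕ) * (ℓ.choose (j : ℕ) : ℝ) * ((j : ℕ) : ℝ) ^ s * a j := by
  obtain ⟨m, rfl⟩ : ∃ m, ℓ = m + 1 := ⟨ℓ - 1, by omega⟩
  clear hℓ
  set lst : Fin (m+2) := Fin.last (m+1) with hlst
  set M : Matrix (Fin (m+2)) (Fin (m+2)) ℝ := matA (m+1) s a with hM
  set g : Fin (m+2) → ℝ := fun j => (-1:ℝ)^(j:ℕ) * ((m+1).choose (j:ℕ) : ℝ) with hg
  set w : Fin (m+2) → ℝ := fun j => ((j:ℕ) : ℝ)^s * a j with hw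
  set B : Matrix (Fin (m+1)) (Fin (m+1)) ℝ :=
    Matrix.of fun i k : Fin (m+1) => (((i:ℕ)*(m+2)+(k:ℕ)+1 : ℕ):ℝ)^m with hB
  -- basic facts about M
  have f1 : M lst = w := by
    funext j
    simp only [hM, matA, hlst, hw, Fin.val_last]
    rw [if_neg (lt_irrefl _)]
  have f2 : ∀ (i : Fin (m+1)) (j : Fin (m+2)),
      M i.castSucc j = (((i:ℕ)*(m+2)+(j:ℕ)+1 : ℕ):ℝ)^m := by
    intro i j
    simp only [hM, matA, Fin.coe_castSucc]
    rw [if_pos i.isLt]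
    push_cast
    ring_nf
  -- φ kills the top rows
  have f3 : ∀ i : Fin (m+1), ∑ j : Fin (m+2), g j * M i.castSucc j = 0 := by
    intro i
    have h := phi_row' m ((i:ℕ)*(m+2))
    rw [← h]
    refine sum_congr rfl fun j _ => ?_
    rw [f2 i j, hg]
  -- determinant of the minor
  have hdetB : B.det ≠ 0 := by
    rw [hB, det_B']
    refine mul_ne_zero (mul_ne_zero (mul_ne_zero ?_ ?_) ?_) ?_
    · exact pow_ne_zero _ (by norm_num)
    · rw [Finset.prod_ne_zero_iff]
      intro k hk
      have hk' : k ≤ m := Nat.lt_succ_iff.mp (mem_range.mp hk)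
      have h3 : 0 < m.choose k := Nat.choose_pos hk'
      exact Nat.cast_ne_zero.mpr h3.ne'
    · positivity
    · have := superFactorial_ne_zero' m
      positivity
  -- Claim A : if φ u = 0 then the determinant with last row u vanishes
  have claimA : ∀ u : Fin (m+2) → ℝ, (∑ j : Fin (m+2), g j * u j) = 0 →
      (M.updateRow lst u).det = 0 := by
    intro u hu
    have hBdet : IsUnit (Bᵀ).det := by
      rw [Matrix.det_transpose]; exact Ne.isUnit hdetB
    set c : Fin (m+1) → ℝ := (Bᵀ)⁻¹.mulVec (fun k => u k.castSucc) with hc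
    have hsolve : Bᵀ.mulVec c = fun k => u k.castSucc := by
      rw [hc, Matrix.mulVec_mulVec, Matrix.mul_nonsing_inv _ hBdet, Matrix.one_mulVec]
    have hc2 : ∀ k : Fin (m+1), ∑ i : Fin (m+1), c i * B i k = u k.castSucc := by
      intro k
      have := congrFun hsolve k
      rw [Matrix.mulVec] at this
      rw [← this]
      simp [dotProduct, Matrix.transpose_apply, mul_comm]
    set v : Fin (m+2) → ℝ := fun j => (∑ i : Fin (m+1), c i * M i.castSucc j) - u j with hv
    have hv1 : ∀ k : Fin (m+1), v k.castSucc = 0 := by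
      intro k
      rw [hv]
      simp only
      rw [sub_eq_zero, ← hc2 k]
      refine sum_congr rfl fun i _ => ?_
      rw [f2 i k.castSucc, hB]
      simp
    have hφv : ∑ j : Fin (m+2), g j * v j = 0 := by
      have hsplit : ∑ j : Fin (m+2), g j * v j
          = (∑ i : Fin (m+1), c i * ∑ j : Fin (m+2), g j * M i.castSucc j)
            - ∑ j : Fin (m+2), g j * u j := by
        have e1 : ∀ j : Fin (m+2), g j * v j
            = (∑ i : Fin (m+1), c i * (g j * M i.castSucc j)) - g j * u j := by
          intro j
          rw [hv]
          simp only
          rw [mul_sub, mul_sum]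
          congr 1
          exact sum_congr rfl fun i _ => by ring
        calc ∑ j : Fin (m+2), g j * v j
            = ∑ j : Fin (m+2),
                ((∑ i : Fin (m+1), c i * (g j * M i.castSucc j)) - g j * u j) :=
              sum_congr rfl fun j _ => e1 j
          _ = (∑ j : Fin (m+2), ∑ i : Fin (m+1), c i * (g j * M i.castSucc j))
                - ∑ j : Fin (m+2), g j * u j := by
              rw [Finset.sum_sub_distrib]
          _ = (∑ i : Fin (m+1), c i * ∑ j : Fin (m+2), g j * M i.castSucc j)
                - ∑ j : Fin (m+2), g j * u j := by
              rw [Finset.sum_comm]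
              congr 1
              exact sum_congr rfl fun i _ => by rw [mul_sum]
      rw [hsplit, hu, sub_zero]
      refine Finset.sum_eq_zero fun i _ => ?_
      rw [f3 i, mul_zero]
    have hvlast : v lst = 0 := by
      rw [Fin.sum_univ_castSucc] at hφv
      have hz : ∀ k : Fin (m+1), g k.castSucc * v k.castSucc = 0 := by
        intro k; rw [hv1 k, mul_zero]
      rw [Finset.sum_eq_zero (fun k _ => hz k), zero_add] at hφv
      have hglst : g lst = (-1:ℝ)^(m+1) := by
        rw [hg]
        simp [hlst]
      rw [hglst] at hφv
      have : (-1:ℝ)^(m+1) ≠ 0 := pow_ne_zero _ (by norm_num)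
      exact (mul_eq_zero.mp hφv).resolve_left this
    have hveq : ∀ j, v j = 0 := by
      intro j
      induction j using Fin.lastCases with
      | last => exact hvlast
      | cast k => exact hv1 k
    have hueq : u = fun j => ∑ i : Fin (m+1), c i * M i.castSucc j := by
      funext j
      have := hveq j
      rw [hv] at this
      simp only at this
      linarith [this]
    set c' : Fin (m+2) → ℝ := Fin.lastCases 0 c with hc'
    have hu2 : u = ∑ i : Fin (m+2), c' i • M i := by
      funext j
      have hrhs : (∑ i : Fin (m+2), c' i • M i) j = ∑ i : Fin (m+1), c i * M i.castSucc j := by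
        rw [Finset.sum_apply, Fin.sum_univ_castSucc]
        simp only [hc', Fin.lastCases_castSucc, Fin.lastCases_last, Pi.smul_apply, smul_eq_mul,
          zero_smul, zero_mul, add_zero, Pi.zero_apply]
      rw [hrhs, hueq]
    rw [hu2, Matrix.det_updateRow_sum]
    simp only [hc', hlst, Fin.lastCases_last, smul_eq_mul, zero_mul]
  -- Claim B : determinant with last row the last standard basis vector
  set eL : Fin (m+2) → ℝ := fun j => if j = lst then 1 else 0 with heL
  have claimB : (M.updateRow lst eL).det = B.det := by
    rw [Matrix.det_succ_row _ lst]
    rw [Finset.sum_eq_single lst]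
    · rw [Matrix.updateRow_self]
      have h1 : eL lst = 1 := by rw [heL]; simp
      rw [h1, mul_one]
      have h2 : (-1:ℝ)^((lst:ℕ) + (lst:ℕ)) = 1 := by
        have : (lst:ℕ) + (lst:ℕ) = 2 * (m+1) := by simp [hlst]; ring
        rw [this, pow_mul]; norm_num
      rw [h2, one_mul]
      congr 1
      ext i k
      rw [hlst, Fin.succAbove_last]
      simp only [Matrix.submatrix_apply]
      rw [Matrix.updateRow_ne (Fin.castSucc_lt_last i).ne, f2, hB]
      simp
    · intro j _ hj
      rw [Matrix.updateRow_self]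
      have : eL j = 0 := by rw [heL]; simp [hj]
      rw [this, mul_zero, zero_mul]
    · intro h
      exact absurd (Finset.mem_univ lst) h
  -- assemble
  have f1' : M = M.updateRow lst w := by rw [← f1, Matrix.updateRow_eq_self]
  set t : ℝ := (-1:ℝ)^(m+1) * ∑ j : Fin (m+2), g j * w j with ht
  set u : Fin (m+2) → ℝ := fun j => w j - t * eL j with hu
  have hφeL : ∑ j : Fin (m+2), g j * eL j = (-1:ℝ)^(m+1) := by
    rw [Finset.sum_eq_single lst]
    · rw [heL]
      simp only [if_pos rfl, mul_one]
      rw [hg]; simp [hlst]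
    · intro j _ hj
      rw [heL]; simp [hj]
    · intro h; exact absurd (Finset.mem_univ lst) h
  have hφu : ∑ j : Fin (m+2), g j * u j = 0 := by
    have hsplit : ∑ j : Fin (m+2), g j * u j
        = (∑ j : Fin (m+2), g j * w j) - t * ∑ j : Fin (m+2), g j * eL j := by
      rw [mul_sum, ← Finset.sum_sub_distrib]
      refine sum_congr rfl fun j _ => ?_
      rw [hu]; ring
    rw [hsplit, hφeL, ht]
    have hsq : ((-1:ℝ)^(m+1)) * ((-1:ℝ)^(m+1)) = 1 := by
      rw [← pow_add]
      have he : (m+1) + (m+1) = 2 * (m+1) := by ring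
      rw [he, pow_mul]; norm_num
    calc (∑ j : Fin (m+2), g j * w j)
          - ((-1:ℝ)^(m+1) * ∑ j : Fin (m+2), g j * w j) * (-1:ℝ)^(m+1)
        = (∑ j : Fin (m+2), g j * w j) * (1 - ((-1:ℝ)^(m+1) * (-1:ℝ)^(m+1))) := by ring
      _ = 0 := by rw [hsq]; ring
  have hwdecomp : w = fun j => u j + t * eL j := by
    funext j; rw [hu]; ring
  have hdetM : M.det = t * B.det := by
    rw [f1', hwdecomp]
    have : (fun j => u j + t * eL j) = u + t • eL := by
      funext j; simp
    rw [this, Matrix.det_updateRow_add, Matrix.det_updateRow_smul, claimA u hφu, claimB, zero_add]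
  rw [hdetM]
  -- final numerical identity
  have hsum : ∑ j : Fin (m+2), g j * w j
      = ∑ j : Fin (m+2), (-1:ℝ)^(j:ℕ) * ((m+1).choose (j:ℕ) : ℝ) * ((j:ℕ):ℝ)^s * a j := by
    refine sum_congr rfl fun j _ => ?_
    rw [hg, hw]; ring
  rw [ht, hsum]
  have hconst : (-1:ℝ)^(m+1) * B.det = sigma (m+1) := by
    rw [hB, det_B', sigma]
    have e1 : (m+1) * ((m+1)-1) / 2 = (m+1)*m/2 := by norm_num
    have e2 : (m+1) - 1 = m := by omega
    have hsig : (m+1)*(m+2)/2 = (m+1)*m/2 + (m+1) := by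
      obtain ⟨q, hq⟩ : 2 ∣ (m+1) * m := by
        have := Nat.even_mul_succ_self m
        rw [mul_comm] at this
        exact this.two_dvd
      have h1 : (m+1)*(m+2) = (m+1)*m + 2*(m+1) := by ring
      omega
    rw [e1, e2, hsig, pow_add]
    have hIco : ∏ j ∈ Finset.Ico 1 (m+1), ((j.factorial : ℝ))^2
        = ((Nat.superFactorial m : ℝ))^2 := by
      rw [Finset.prod_pow]
      congr 1
      rw [Finset.Ico_add_one_right_eq_Icc, ← Nat.prod_Icc_factorial m]
      push_cast
      rfl
    rw [hIco]
    push_cast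
    ring
  rw [← hconst]
  ring
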